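/- Let κ = (κ_1, …, κ_n) ∈ Γ_m^+ with κ_1 ≥ κ_2 ≥ ⋯ ≥ κ_n. Then κ_1 · σ_{m-1}(κ|1) ≥ (m/n) σ_m(κ), where σ_{m-1}(κ|1) is the (m−1)-th elementary symmetric polynomial of (κ_2, …, κ_n). -/

import Mathlib

open Multiset

namespace StmtAux

lemma esymm_zero' (s : Multiset ℝ) : s.esymm 0 = 1 := by
  simp [Multiset.esymm]

lemma esymm_of_card_lt {s : Multiset ℝ} {j : ℕ} (h : Multiset.card s < j) : s.esymm j = 0 := by
  simp [Multiset.esymm, Multiset.powersetCard_eq_empty _ h]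

lemma esymm_cons (a : ℝ) (s : Multiset ℝ) (j : ℕ) :
    (a ::ₘ s).esymm (j+1) = a * s.esymm j + s.esymm (j+1) := by
  rw [Multiset.esymm, Multiset.powersetCard_cons, Multiset.map_add, Multiset.sum_add,
    Multiset.map_map]
  simp only [Function.comp_def, Multiset.prod_cons]
  rw [Multiset.sum_map_mul_left, Multiset.esymm, Multiset.esymm]
  ring

lemma esymm_one' (s : Multiset ℝ) : s.esymm 1 = s.sum := by
  rw [Multiset.esymm, Multiset.powersetCard_one, Multiset.map_map]
  simp

lemma esymm_card (s : Multiset ℝ) : s.esymm (Multiset.card s) = s.prod := by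
  induction s using Multiset.induction_on with
  | empty => simp [esymm_zero']
  | cons a u ih =>
      rw [Multiset.card_cons, esymm_cons, ih, Multiset.prod_cons,
        esymm_of_card_lt (by simp), add_zero]

lemma erase_cons_of_mem {a x : ℝ} {u : Multiset ℝ} (hx : x ∈ u) :
    (a ::ₘ u).erase x = a ::ₘ u.erase x := by
  by_cases hax : x = a
  · subst hax
    rw [Multiset.erase_cons_head, Multiset.cons_erase hx]
  · rw [Multiset.erase_cons_tail _ (fun h => hax h.symm)]

lemma esymm_erase {s : Multiset ℝ} {a : ℝ} (h : a ∈ s) (j : ℕ) :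
    s.esymm (j+1) = a * (s.erase a).esymm j + (s.erase a).esymm (j+1) := by
  conv_lhs => rw [← Multiset.cons_erase h]
  rw [esymm_cons]


lemma map_erase_fun (f : ℝ → Multiset ℝ → ℝ) (a : ℝ) (u : Multiset ℝ) :
    (a ::ₘ u).map (fun x => f x ((a ::ₘ u).erase x))
      = f a u ::ₘ u.map (fun x => f x (a ::ₘ u.erase x)) := by
  rw [Multiset.map_cons, Multiset.erase_cons_head]
  congr 1
  apply Multiset.map_congr rfl
  intro x hx
  rw [erase_cons_of_mem hx]

lemma sum_mul_esymm_erase (s : Multiset ℝ) (j : ℕ) :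
    (s.map (fun b => b * (s.erase b).esymm j)).sum = ((j:ℝ)+1) * s.esymm (j+1) := by
  induction s using Multiset.induction_on generalizing j with
  | empty => simp [esymm_of_card_lt (show Multiset.card (0 : Multiset ℝ) < j+1 by simp)]
  | cons a u ih =>
      rw [map_erase_fun (fun x t => x * t.esymm j), Multiset.sum_cons]
      cases j with
      | zero =>
          rw [Multiset.map_congr rfl
            (show ∀ x ∈ u, x * (a ::ₘ u.erase x).esymm 0 = x by
              intro x hx; rw [esymm_zero', mul_one])]
          rw [Multiset.map_id', esymm_zero', esymm_one', Multiset.sum_cons]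
          push_cast
          ring
      | succ j' =>
          rw [Multiset.map_congr rfl
            (show ∀ x ∈ u, x * (a ::ₘ u.erase x).esymm (j'+1)
                = a * (x * (u.erase x).esymm j') + x * (u.erase x).esymm (j'+1) by
              intro x hx; rw [esymm_cons]; ring)]
          rw [Multiset.sum_map_add, Multiset.sum_map_mul_left, ih j', ih (j'+1), esymm_cons]
          push_cast
          ring

lemma sum_esymm_erase (s : Multiset ℝ) (j : ℕ) :
    (s.map (fun b => (s.erase b).esymm j)).sum
      = ((Multiset.card s : ℝ) - j) * s.esymm j := by
  induction s using Multiset.induction_on generalizing j with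
  | empty =>
      cases j with
      | zero => simp [esymm_zero']
      | succ j' => simp [esymm_of_card_lt (show Multiset.card (0 : Multiset ℝ) < j'+1 by simp)]
  | cons a u ih =>
      rw [map_erase_fun (fun _ t => t.esymm j), Multiset.sum_cons]
      cases j with
      | zero =>
          rw [Multiset.map_congr rfl
            (show ∀ x ∈ u, (a ::ₘ u.erase x).esymm 0 = 1 by intro x hx; rw [esymm_zero'])]
          simp [esymm_zero', Multiset.map_const']
          ring
      | succ j' =>
          rw [Multiset.map_congr rfl
            (show ∀ x ∈ u, (a ::ₘ u.erase x).esymm (j'+1)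
                = a * (u.erase x).esymm j' + (u.erase x).esymm (j'+1) by
              intro x hx; rw [esymm_cons])]
          rw [Multiset.sum_map_add, Multiset.sum_map_mul_left, ih j', ih (j'+1),
            esymm_cons, Multiset.card_cons]
          push_cast
          ring

lemma sum_erase_prod (s : Multiset ℝ) (l : ℕ) (h : Multiset.card s = l + 1) :
    (s.map (fun x => (s.erase x).prod)).sum = s.esymm l := by
  induction s using Multiset.induction_on generalizing l with
  | empty => simp at h
  | cons a u ih =>
      rw [Multiset.card_cons] at h
      have hu : Multiset.card u = l := by omega
      rw [map_erase_fun (fun _ t => t.prod), Multiset.sum_cons]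
      rw [Multiset.map_congr rfl
        (show ∀ x ∈ u, (a ::ₘ u.erase x).prod = a * (u.erase x).prod by
          intro x hx; rw [Multiset.prod_cons])]
      rw [Multiset.sum_map_mul_left]
      cases l with
      | zero =>
          have : u = 0 := Multiset.card_eq_zero.mp hu
          subst this
          simp [esymm_zero']
      | succ l' =>
          rw [ih l' hu, esymm_cons, ← hu, esymm_card]
          ring

lemma esymm_two_erase_prod (s : Multiset ℝ) (c : ℕ) (h : Multiset.card s = c + 2) :
    (s.map (fun x => (s.erase x).prod)).esymm 2 = s.prod * s.esymm c := by
  induction s using Multiset.induction_on generalizing c with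
  | empty => simp at h
  | cons a u ih =>
      rw [Multiset.card_cons] at h
      have hu : Multiset.card u = c + 1 := by omega
      rw [map_erase_fun (fun _ t => t.prod)]
      rw [Multiset.map_congr rfl
        (show ∀ x ∈ u, (a ::ₘ u.erase x).prod = a * (u.erase x).prod by
          intro x hx; rw [Multiset.prod_cons])]
      have hmm : u.map (fun x => a * (u.erase x).prod)
          = (u.map (fun x => (u.erase x).prod)).map (fun y => a * y) := by
        rw [Multiset.map_map]; rfl
      have hec : ∀ (q : ℝ) (r : Multiset ℝ), (q ::ₘ r).esymm 2 = q * r.esymm 1 + r.esymm 2 :=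
        fun q r => esymm_cons q r 1
      rw [hec, hmm, esymm_one']
      have hsc : ((u.map (fun x => (u.erase x).prod)).map (fun y => a * y)).esymm 2
          = a^2 * (u.map (fun x => (u.erase x).prod)).esymm 2 := by
        have := Multiset.pow_smul_esymm (a : ℝ) 2 (u.map (fun x => (u.erase x).prod))
        simp only [smul_eq_mul] at this
        rw [← this]
      rw [hsc, Multiset.sum_map_mul_left, Multiset.map_id', sum_erase_prod u c hu]
      cases c with
      | zero =>
          rw [show (u.map (fun x => (u.erase x).prod)).esymm 2 = 0 from
              esymm_of_card_lt (by rw [Multiset.card_map]; omega),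
            Multiset.prod_cons, esymm_zero', esymm_zero']
          ring
      | succ c' =>
          rw [ih c' (by omega), Multiset.prod_cons, esymm_cons, ← esymm_card u, hu]
          ring

lemma esymm_nonneg {s : Multiset ℝ} (h : ∀ b ∈ s, 0 ≤ b) (j : ℕ) : 0 ≤ s.esymm j := by
  induction s using Multiset.induction_on generalizing j with
  | empty =>
      cases j with
      | zero => rw [esymm_zero']; norm_num
      | succ j' => rw [esymm_of_card_lt (by simp)]
  | cons a u ih =>
      cases j with
      | zero => rw [esymm_zero']; norm_num
      | succ j' =>
          rw [esymm_cons]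
          have ha : 0 ≤ a := h a (Multiset.mem_cons_self a u)
          have hu : ∀ b ∈ u, 0 ≤ b := fun b hb => h b (Multiset.mem_cons_of_mem hb)
          have := ih hu j'
          have := ih hu (j'+1)
          positivity

lemma esymm_pos {s : Multiset ℝ} (h : ∀ b ∈ s, 0 < b) {j : ℕ} (hj : j ≤ Multiset.card s) :
    0 < s.esymm j := by
  induction s using Multiset.induction_on generalizing j with
  | empty =>
      obtain rfl : j = 0 := Nat.le_zero.mp (by simpa using hj)
      rw [esymm_zero']; norm_num
  | cons a u ih =>
      cases j with
      | zero => rw [esymm_zero']; norm_num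
      | succ j' =>
          rw [esymm_cons]
          have ha : 0 < a := h a (Multiset.mem_cons_self a u)
          have hu : ∀ b ∈ u, 0 < b := fun b hb => h b (Multiset.mem_cons_of_mem hb)
          have h1 : 0 < u.esymm j' := ih hu (by simp at hj; omega)
          have h2 : 0 ≤ u.esymm (j'+1) := esymm_nonneg (fun b hb => (hu b hb).le) _
          nlinarith

lemma cauchy_ms (s : Multiset ℝ) :
    s.sum ^ 2 ≤ (Multiset.card s : ℝ) * (s.map (fun x => x^2)).sum := by
  induction s using Multiset.induction_on with
  | empty => simp
  | cons a u ih =>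
      rw [Multiset.sum_cons, Multiset.map_cons, Multiset.sum_cons, Multiset.card_cons]
      have hQ : 0 ≤ (u.map (fun x => x^2)).sum := by
        apply Multiset.sum_nonneg
        intro x hx
        obtain ⟨y, _, rfl⟩ := Multiset.mem_map.mp hx
        positivity
      have hc : (0:ℝ) ≤ (Multiset.card u : ℝ) := by positivity
      push_cast
      set c := (Multiset.card u : ℝ) with hcdef
      set Q := (u.map (fun x => x^2)).sum with hQdef
      rcases eq_or_lt_of_le hc with h0 | h0
      · have hS2 : u.sum ^ 2 = 0 := le_antisymm (by rw [← h0] at ih; simpa using ih) (sq_nonneg _)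
        have hS : u.sum = 0 := by
          have := sq_eq_zero_iff.mp hS2
          exact this
        rw [hS]
        nlinarith [hQ, hc, sq_nonneg a, mul_nonneg hc (add_nonneg (sq_nonneg a) hQ)]
      · have h3 : 0 ≤ c * ((c+1)*(a^2 + Q) - (a + u.sum)^2) := by
          have id : c * ((c+1)*(a^2+Q) - (a+u.sum)^2)
              = (c*a - u.sum)^2 + (c+1)*(c*Q - u.sum^2) := by ring
          rw [id]
          exact add_nonneg (sq_nonneg _) (mul_nonneg (by linarith) (by linarith [ih]))
        nlinarith [h3, h0]

lemma sq_sum_eq (s : Multiset ℝ) :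
    s.sum ^ 2 = (s.map (fun x => x^2)).sum + 2 * s.esymm 2 := by
  induction s using Multiset.induction_on with
  | empty => simp [esymm_of_card_lt (show Multiset.card (0:Multiset ℝ) < 2 by simp)]
  | cons a u ih =>
      have hec : (a ::ₘ u).esymm 2 = a * u.esymm 1 + u.esymm 2 := esymm_cons a u 1
      rw [Multiset.sum_cons, Multiset.map_cons, Multiset.sum_cons, hec, esymm_one']
      linear_combination ih

lemma top_newton (t : Multiset ℝ) (c : ℕ) (h : Multiset.card t = c + 2) :
    2 * ((c:ℝ)+2)^2 * (t.esymm c * t.esymm (c+2))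
      ≤ ((c:ℝ)+2) * ((c:ℝ)+1) * t.esymm (c+1)^2 := by
  set p := t.map (fun x => (t.erase x).prod) with hp
  have hcard : (Multiset.card p : ℝ) = (c:ℝ) + 2 := by
    rw [hp, Multiset.card_map, h]; push_cast; ring
  have hA : p.sum = t.esymm (c+1) := sum_erase_prod t (c+1) h
  have hB : p.esymm 2 = t.esymm (c+2) * t.esymm c := by
    rw [esymm_two_erase_prod t c h, ← esymm_card t, h]
  have hC := cauchy_ms p
  have hsq := sq_sum_eq p
  rw [hcard] at hC
  rw [hA] at hC hsq
  rw [hB] at hsq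
  nlinarith [hC, hsq]


open Polynomial in
lemma iterate_deriv_real_rooted (P : Polynomial ℝ) (i : ℕ) (hi : i ≤ P.natDegree)
    (hroots : Multiset.card P.roots = P.natDegree) :
    (derivative^[i] P).natDegree = P.natDegree - i ∧
      Multiset.card (derivative^[i] P).roots = P.natDegree - i := by
  induction i with
  | zero => simpa using hroots
  | succ i ih =>
      have hi' : i ≤ P.natDegree := Nat.le_of_succ_le hi
      obtain ⟨hdeg, hcard⟩ := ih hi'
      rw [Function.iterate_succ_apply']
      set q := derivative^[i] P with hq
      have h1 : (derivative q).natDegree ≤ P.natDegree - (i+1) := by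
        have := natDegree_derivative_le q
        omega
      have h2 : P.natDegree - (i+1) ≤ Multiset.card (derivative q).roots := by
        have := card_roots_le_derivative q
        omega
      have h3 : Multiset.card (derivative q).roots ≤ (derivative q).natDegree :=
        card_roots' _
      omega

open Polynomial in
lemma newton_ineq (s : Multiset ℝ) (j : ℕ) (h : j + 2 ≤ Multiset.card s) :
    s.esymm j * s.esymm (j+2) ≤ s.esymm (j+1)^2 := by
  obtain ⟨k, hk⟩ : ∃ k, Multiset.card s = (j + 2) + k := Nat.exists_eq_add_of_le h
  set n := Multiset.card s with hn
  set P : Polynomial ℝ := (s.map (fun r => X + C r)).prod with hP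
  have hmono : ∀ p ∈ s.map (fun r : ℝ => X + C r), p.Monic := by
    intro p hp
    obtain ⟨r, _, rfl⟩ := Multiset.mem_map.mp hp
    exact monic_X_add_C r
  have hPmonic : P.Monic := monic_multiset_prod_of_monic _ _ (fun r _ => monic_X_add_C r)
  have hdfpos : ∀ a b : ℕ, b ≤ a → 0 < a.descFactorial b := fun a b hba =>
    Nat.pos_of_ne_zero (by rw [Ne, Nat.descFactorial_eq_zero_iff_lt]; omega)
  have hr1 : ∀ r : ℝ, (X + C r).roots = {-r} := by
    intro r
    rw [show X + C r = X - C (-r) by rw [map_neg, sub_neg_eq_add], roots_X_sub_C]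
  have hPdeg : P.natDegree = n := by
    rw [hP, natDegree_multiset_prod_of_monic _ hmono, Multiset.map_map]
    simp [Function.comp_def, natDegree_X_add_C, hn]
  have hProots : Multiset.card P.roots = n := by
    rw [hP, roots_multiset_prod _ (by
      intro h0
      obtain ⟨r, _, hr⟩ := Multiset.mem_map.mp h0
      exact (monic_X_add_C r).ne_zero hr)]
    rw [Multiset.bind_map]
    simp only [hr1, Multiset.bind_singleton, Multiset.card_map]
    exact hn.symm
  -- iterated derivative
  obtain ⟨hhdeg, hhcard⟩ :=
    iterate_deriv_real_rooted P k (by omega) (by rw [hProots, hPdeg])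
  set H : Polynomial ℝ := derivative^[k] P with hH
  rw [hPdeg] at hhdeg hhcard
  have hdegH : H.natDegree = j + 2 := by omega
  have hcardH : Multiset.card H.roots = j + 2 := by omega
  -- coefficients of H via iterated derivative
  have hcoeffH : ∀ i, H.coeff i = ((i + k).descFactorial k : ℝ) * P.coeff (i + k) := by
    intro i
    rw [hH, Polynomial.coeff_iterate_derivative, nsmul_eq_mul]
  -- coefficients of P via Vieta
  have hcoeffP : ∀ i, i ≤ n → P.coeff i = s.esymm (n - i) := by
    intro i hi
    rw [hP, Multiset.prod_X_add_C_coeff s (by omega : i ≤ Multiset.card s)]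
  -- leading coefficient of H
  have hlc : H.leadingCoeff = (n.descFactorial k : ℝ) := by
    rw [Polynomial.leadingCoeff, hdegH, hcoeffH, hcoeffP _ (by omega)]
    rw [show j + 2 + k = n by omega, show n - n = 0 by omega, esymm_zero', mul_one]
  have hlcpos : 0 < (n.descFactorial k : ℝ) := by
    exact_mod_cast hdfpos n k (by omega)
  -- factor H over its roots
  have hsplits : Splits H := (splits_iff_card_roots).mpr (by omega)
  have hfac : H = C H.leadingCoeff * (H.roots.map (fun a => X - C a)).prod :=
    hsplits.eq_prod_roots
  set t : Multiset ℝ := H.roots.map (fun a => -a) with ht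
  have hcardt : Multiset.card t = j + 2 := by rw [ht, Multiset.card_map, hcardH]
  have hmaps : t.map (fun r => X + C r) = H.roots.map (fun a => X - C a) := by
    rw [ht, Multiset.map_map]
    apply Multiset.map_congr rfl
    intro a _
    simp [sub_eq_add_neg]
  have hfac2 : H = C H.leadingCoeff * (t.map (fun r => X + C r)).prod := by
    rw [← hmaps] at hfac
    exact hfac
  -- coefficients of H via t
  have hcoefft : ∀ i, i ≤ j + 2 → H.coeff i = (n.descFactorial k : ℝ) * t.esymm (j + 2 - i) := by
    intro i hi
    conv_lhs => rw [hfac2]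
    rw [Polynomial.coeff_C_mul, hlc, Multiset.prod_X_add_C_coeff t (by omega : i ≤ Multiset.card t),
      hcardt]
  -- the three coefficient identities
  have e0 : (n.descFactorial k : ℝ) * t.esymm (j+2) = ((k.descFactorial k : ℝ)) * s.esymm (j+2) := by
    have h1 := hcoefft 0 (by omega)
    have h2 := hcoeffH 0
    rw [h1] at h2
    rw [show j + 2 - 0 = j + 2 by omega] at h2
    rw [h2, hcoeffP _ (by omega), show (0 + k) = k by omega, show n - k = j + 2 by omega]
  have e1 : (n.descFactorial k : ℝ) * t.esymm (j+1) = (((k+1).descFactorial k : ℝ)) * s.esymm (j+1) := by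
    have h1 := hcoefft 1 (by omega)
    have h2 := hcoeffH 1
    rw [h1] at h2
    rw [show j + 2 - 1 = j + 1 by omega, show (1 + k) = k + 1 by omega] at h2
    rw [h2, hcoeffP _ (by omega), show n - (k + 1) = j + 1 by omega]
  have e2 : (n.descFactorial k : ℝ) * t.esymm j = (((k+2).descFactorial k : ℝ)) * s.esymm j := by
    have h1 := hcoefft 2 (by omega)
    have h2 := hcoeffH 2
    rw [h1] at h2
    rw [show j + 2 - 2 = j by omega, show (2 + k) = k + 2 by omega] at h2
    rw [h2, hcoeffP _ (by omega), show n - (k + 2) = j by omega]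
  -- top Newton applied to t
  have htn := top_newton t j hcardt
  -- descFactorial arithmetic
  have hd1 : (k+1).descFactorial k = (k+1) * k.descFactorial k := by
    have ha := Nat.succ_descFactorial_succ k k
    have hb := Nat.descFactorial_succ (k+1) k
    rw [show k+1-k = 1 by omega, one_mul] at hb
    rw [← hb]
    exact ha
  have hd2 : 2 * ((k+2).descFactorial k) = (k+2) * ((k+1).descFactorial k) := by
    have ha := Nat.succ_descFactorial_succ (k+1) k
    have hb := Nat.descFactorial_succ (k+2) k
    rw [show k+2-k = 2 by omega] at hb
    rw [← hb]
    exact ha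
  have hd0posR : (0:ℝ) < (k.descFactorial k : ℝ) := by
    exact_mod_cast hdfpos k k (le_refl k)
  have hd1R : ((k+1).descFactorial k : ℝ) = ((k:ℝ)+1) * (k.descFactorial k : ℝ) := by
    exact_mod_cast hd1
  have hd2R : (2:ℝ) * ((k+2).descFactorial k : ℝ) = ((k:ℝ)+2) * ((k+1).descFactorial k : ℝ) := by
    exact_mod_cast hd2
  have hd1pos : (0:ℝ) < ((k+1).descFactorial k : ℝ) := by rw [hd1R]; positivity
  have hd2pos : (0:ℝ) < ((k+2).descFactorial k : ℝ) := by nlinarith [hd2R, hd1pos]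
  -- multiply top newton by lc^2
  have key : 2 * ((j:ℝ)+2)^2 * ((((k+2).descFactorial k : ℝ) * s.esymm j)
        * ((k.descFactorial k : ℝ) * s.esymm (j+2)))
      ≤ ((j:ℝ)+2) * ((j:ℝ)+1) * (((k+1).descFactorial k : ℝ) * s.esymm (j+1))^2 := by
    have hmul := mul_le_mul_of_nonneg_left htn (le_of_lt (mul_pos hlcpos hlcpos))
    calc 2 * ((j:ℝ)+2)^2 * ((((k+2).descFactorial k : ℝ) * s.esymm j)
          * ((k.descFactorial k : ℝ) * s.esymm (j+2)))
        = ((n.descFactorial k : ℝ) * (n.descFactorial k : ℝ)) *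
            (2 * ((j:ℝ)+2)^2 * (t.esymm j * t.esymm (j+2))) := by
          rw [← e2, ← e0]; ring
      _ ≤ ((n.descFactorial k : ℝ) * (n.descFactorial k : ℝ)) *
            (((j:ℝ)+2) * ((j:ℝ)+1) * t.esymm (j+1)^2) := hmul
      _ = ((j:ℝ)+2) * ((j:ℝ)+1) * ((n.descFactorial k : ℝ) * t.esymm (j+1))^2 := by ring
      _ = ((j:ℝ)+2) * ((j:ℝ)+1) * (((k+1).descFactorial k : ℝ) * s.esymm (j+1))^2 := by
          rw [e1]
  have hj0 : (0:ℝ) ≤ (j:ℝ) := Nat.cast_nonneg j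
  have hk0 : (0:ℝ) ≤ (k:ℝ) := Nat.cast_nonneg k
  have expand1 : ((j:ℝ)+2)*((j:ℝ)+1)*((k+1).descFactorial k : ℝ)^2
      = (((j:ℝ)+1)*((k:ℝ)+1)) * (((j:ℝ)+2) * (((k+1).descFactorial k : ℝ)*(k.descFactorial k : ℝ))) := by
    linear_combination (((j:ℝ)+2)*((j:ℝ)+1)*((k+1).descFactorial k : ℝ)) * hd1R
  have expand2 : 2*((j:ℝ)+2)^2*(((k+2).descFactorial k : ℝ)*(k.descFactorial k : ℝ))
      = (((j:ℝ)+2)*((k:ℝ)+2)) * (((j:ℝ)+2) * (((k+1).descFactorial k : ℝ)*(k.descFactorial k : ℝ))) := by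
    linear_combination (((j:ℝ)+2)^2*(k.descFactorial k : ℝ)) * hd2R
  have hAB : ((j:ℝ)+2)*((j:ℝ)+1)*((k+1).descFactorial k : ℝ)^2
      ≤ 2*((j:ℝ)+2)^2*(((k+2).descFactorial k : ℝ)*(k.descFactorial k : ℝ)) := by
    rw [expand1, expand2]
    apply mul_le_mul_of_nonneg_right
    · nlinarith [hj0, hk0]
    · exact mul_nonneg (by positivity) (le_of_lt (mul_pos hd1pos hd0posR))
  have hApos : (0:ℝ) < 2*((j:ℝ)+2)^2*(((k+2).descFactorial k : ℝ)*(k.descFactorial k : ℝ)) :=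
    mul_pos (by positivity) (mul_pos hd2pos hd0posR)
  have final : (2*((j:ℝ)+2)^2*(((k+2).descFactorial k : ℝ)*(k.descFactorial k : ℝ)))
        * (s.esymm j * s.esymm (j+2))
      ≤ (2*((j:ℝ)+2)^2*(((k+2).descFactorial k : ℝ)*(k.descFactorial k : ℝ)))
        * (s.esymm (j+1)^2) := by
    calc (2*((j:ℝ)+2)^2*(((k+2).descFactorial k : ℝ)*(k.descFactorial k : ℝ)))
          * (s.esymm j * s.esymm (j+2))
        = 2 * ((j:ℝ)+2)^2 * ((((k+2).descFactorial k : ℝ) * s.esymm j)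
            * ((k.descFactorial k : ℝ) * s.esymm (j+2))) := by ring
      _ ≤ ((j:ℝ)+2) * ((j:ℝ)+1) * (((k+1).descFactorial k : ℝ) * s.esymm (j+1))^2 := key
      _ = (((j:ℝ)+2)*((j:ℝ)+1)*((k+1).descFactorial k : ℝ)^2) * s.esymm (j+1)^2 := by ring
      _ ≤ (2*((j:ℝ)+2)^2*(((k+2).descFactorial k : ℝ)*(k.descFactorial k : ℝ)))
            * (s.esymm (j+1)^2) := mul_le_mul_of_nonneg_right hAB (sq_nonneg _)
  exact le_of_mul_le_mul_left final hApos

lemma gamma_erase_nonpos {s : Multiset ℝ} {a : ℝ} {m : ℕ} (ha : a ∈ s) (ha0 : a ≤ 0)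
    (hG : ∀ j, 1 ≤ j → j ≤ m → 0 < s.esymm j) :
    ∀ j, j ≤ m → 0 < (s.erase a).esymm j := by
  intro j
  induction j with
  | zero => intro _; rw [esymm_zero']; norm_num
  | succ j' ih =>
      intro hj
      have h1 := ih (by omega)
      have h2 := hG (j'+1) (by omega) hj
      have h3 := esymm_erase ha j'
      nlinarith [mul_nonneg (neg_nonneg.mpr ha0) h1.le]

lemma all_pos_of_gamma_card {s : Multiset ℝ}
    (hG : ∀ j, 1 ≤ j → j ≤ Multiset.card s → 0 < s.esymm j) :
    ∀ b ∈ s, 0 < b := by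
  intro b hb
  by_contra hb0
  push_neg at hb0
  have h := gamma_erase_nonpos hb hb0 hG (Multiset.card s) (le_refl _)
  have hc : 0 < Multiset.card s := Multiset.card_pos.mpr (by
    intro h0; rw [h0] at hb; exact Multiset.notMem_zero b hb)
  have h0 : (s.erase b).esymm (Multiset.card s) = 0 :=
    esymm_of_card_lt (by rw [Multiset.card_erase_of_mem hb, Nat.pred_eq_sub_one]; omega)
  rw [h0] at h
  exact lt_irrefl 0 h

lemma factF : ∀ (m' : ℕ) (s : Multiset ℝ) (a : ℝ), m' + 1 ≤ Multiset.card s →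
    (∀ j, 1 ≤ j → j ≤ m' + 1 → 0 < s.esymm j) → a ∈ s →
    ∀ j, j ≤ m' → 0 < (s.erase a).esymm j := by
  intro m'
  induction m' using Nat.strong_induction_on with
  | _ m' ih =>
    intro s a hcard hG ha j hj
    cases j with
    | zero => rw [esymm_zero']; norm_num
    | succ j' =>
      by_cases ha0 : a ≤ 0
      · exact gamma_erase_nonpos ha ha0 hG (j'+1) (by omega)
      push_neg at ha0
      rcases Nat.lt_or_ge (j'+1) m' with hlt | hge
      · exact ih (j'+1) (by omega) s a (by omega)
          (fun jj h1 h2 => hG jj h1 (by omega)) ha (j'+1) (le_refl _)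
      · have hjm : j' + 1 = m' := by omega
        by_cases hcs : m' + 1 = Multiset.card s
        · have hpos := all_pos_of_gamma_card (s := s)
            (fun jj h1 h2 => hG jj h1 (by omega))
          apply esymm_pos (fun b hb => hpos b (Multiset.mem_of_mem_erase hb))
          rw [Multiset.card_erase_of_mem ha, Nat.pred_eq_sub_one]
          omega
        · have hlt2 : m' + 1 < Multiset.card s := lt_of_le_of_ne hcard hcs
          have hc0 : 0 < (s.erase a).esymm j' := by
            cases j' with
            | zero => rw [esymm_zero']; norm_num
            | succ j'' =>
                exact ih (j''+1) (by omega) s a (by omega)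
                  (fun jj h1 h2 => hG jj h1 (by omega)) ha (j''+1) (le_refl _)
          have hA := esymm_erase ha j'
          have hB := esymm_erase ha (j'+1)
          rw [(by omega : j'+1+1 = j'+2)] at hB
          have hN := newton_ineq (s.erase a) j' (by
            rw [Multiset.card_erase_of_mem ha, Nat.pred_eq_sub_one]; omega)
          have hG1 := hG (j'+1) (by omega) (by omega)
          have hG2 := hG (j'+2) (by omega) (by omega)
          by_contra hneg
          push_neg at hneg
          rw [hA] at hG1
          rw [hB] at hG2
          -- a * c0 + c1 > 0, a * c1 + c2 > 0, c1 ≤ 0, c0 > 0, a > 0, c0*c2 ≤ c1^2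
          rcases lt_or_eq_of_le hneg with hneg' | heq
          · have k2 : -( (s.erase a).esymm (j'+1)) < a * (s.erase a).esymm j' := by linarith
            have k3 : a * (-( (s.erase a).esymm (j'+1))) < (s.erase a).esymm (j'+2) := by linarith
            have hmul := mul_lt_mul'' k2 k3 (by linarith) (by nlinarith)
            nlinarith [hmul, ha0, hN]
          · have hc2 : 0 < (s.erase a).esymm (j'+2) := by nlinarith [hG2, heq, ha0]
            nlinarith [hN, mul_pos hc0 hc2, heq]

lemma main_ms (s : Multiset ℝ) (m' : ℕ) (a : ℝ) (hcard : m' + 1 ≤ Multiset.card s)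
    (hG : ∀ j, 1 ≤ j → j ≤ m' + 1 → 0 < s.esymm j) (ha : a ∈ s) (hmax : ∀ b ∈ s, b ≤ a) :
    ((m':ℝ)+1) * s.esymm (m'+1) ≤ (Multiset.card s : ℝ) * (a * (s.erase a).esymm m') := by
  have hsum : s.sum ≤ (Multiset.card s) • a := Multiset.sum_le_card_nsmul s a hmax
  have hapos : 0 < a := by
    have h1 := hG 1 (le_refl 1) (by omega)
    rw [esymm_one'] at h1
    rw [nsmul_eq_mul] at hsum
    by_contra hcon
    push_neg at hcon
    have hc : (0:ℝ) ≤ (Multiset.card s : ℝ) := by positivity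
    nlinarith [hsum, h1, mul_nonpos_of_nonneg_of_nonpos hc hcon]
  have hE : 0 < (s.erase a).esymm m' := factF m' s a hcard hG ha m' (le_refl _)
  have hexp := esymm_erase ha m'
  have hcastle : ((m':ℝ)+1) ≤ (Multiset.card s : ℝ) := by exact_mod_cast hcard
  by_cases hm : (s.erase a).esymm (m'+1) ≤ 0
  · have h1 : s.esymm (m'+1) ≤ a * (s.erase a).esymm m' := by linarith
    nlinarith [mul_pos hapos hE, h1, hG (m'+1) (by omega) (le_refl _)]
  · push_neg at hm
    have hG' : ∀ j, 1 ≤ j → j ≤ m'+1 → 0 < (s.erase a).esymm j := by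
      intro jj h1 h2
      rcases Nat.lt_or_ge jj (m'+1) with hlt | hge
      · exact factF m' s a hcard hG ha jj (by omega)
      · have hjj : jj = m'+1 := by omega
        rw [hjj]
        exact hm
    have hcard' : m' + 1 ≤ Multiset.card (s.erase a) := by
      by_contra hcc
      push_neg at hcc
      rw [esymm_of_card_lt hcc] at hm
      exact lt_irrefl 0 hm
    have hM2 := sum_mul_esymm_erase (s.erase a) m'
    have hM3 := sum_esymm_erase (s.erase a) m'
    have hle : ((s.erase a).map (fun b => b * ((s.erase a).erase b).esymm m')).sum
        ≤ ((s.erase a).map (fun b => a * ((s.erase a).erase b).esymm m')).sum := by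
      apply Multiset.sum_map_le_sum_map
      intro b hb
      have hEb := factF m' (s.erase a) b hcard' hG' hb m' (le_refl _)
      exact mul_le_mul_of_nonneg_right (hmax b (Multiset.mem_of_mem_erase hb)) hEb.le
    rw [hM2, Multiset.sum_map_mul_left, hM3] at hle
    -- (m'+1) e_{m'+1}(s') ≤ a * ((card s' : ℝ) - m') * e_{m'}(s')
    have hone : 1 ≤ Multiset.card s := by omega
    have hcerase : (Multiset.card (s.erase a) : ℝ) = (Multiset.card s : ℝ) - 1 := by
      rw [Multiset.card_erase_of_mem ha, Nat.pred_eq_sub_one,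
        Nat.cast_sub hone, Nat.cast_one]
    rw [hcerase] at hle
    nlinarith [hle, hexp, mul_pos hapos hE, hcastle]

end StmtAux

open Finset

noncomputable def esym {n : ℕ} (m : ℕ) (κ : Fin n → ℝ) : ℝ :=
  ∑ s ∈ Finset.powersetCard m (Finset.univ : Finset (Fin n)), ∏ i ∈ s, κ i

noncomputable def esymRem {n : ℕ} (m : ℕ) (κ : Fin n → ℝ) (i : Fin n) : ℝ :=
  ∑ s ∈ Finset.powersetCard m ((Finset.univ : Finset (Fin n)).erase i), ∏ j ∈ s, κ j

/-- If κ ∈ Γ_m^+ is ordered decreasingly, then κ_1 σ_{m-1}(κ|1) ≥ (m/n) σ_m(κ). -/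
theorem stmt_4 {n : ℕ} (hn : 0 < n) (m : ℕ) (hm : 1 ≤ m) (hmn : m ≤ n)
    (κ : Fin n → ℝ) (hΓ : ∀ j, 1 ≤ j → j ≤ m → 0 < esym j κ)
    (hsort : ∀ i j : Fin n, i ≤ j → κ j ≤ κ i) :
    ((m : ℝ) / (n : ℝ)) * esym m κ
      ≤ κ ⟨0, hn⟩ * esymRem (m - 1) κ ⟨0, hn⟩ := by
  obtain ⟨m', rfl⟩ : ∃ m', m = m' + 1 := ⟨m - 1, by omega⟩
  set i0 : Fin n := ⟨0, hn⟩ with hi0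
  set s : Multiset ℝ := (Finset.univ : Finset (Fin n)).val.map κ with hs
  have hesym : ∀ j, esym j κ = s.esymm j := by
    intro j
    rw [esym, hs, Finset.esymm_map_val]
  have hmemval : i0 ∈ (Finset.univ : Finset (Fin n)).val := Finset.mem_val.mpr (Finset.mem_univ i0)
  have hrem : esymRem m' κ i0 = (s.erase (κ i0)).esymm m' := by
    rw [esymRem, ← Finset.esymm_map_val]
    congr 1
    rw [Finset.erase_val, hs]
    conv_rhs => rw [← Multiset.cons_erase hmemval]
    rw [Multiset.map_cons, Multiset.erase_cons_head]
  have hcards : Multiset.card s = n := by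
    rw [hs, Multiset.card_map]
    exact (Finset.card_univ (α := Fin n)).trans (Fintype.card_fin n)
  have hG : ∀ j, 1 ≤ j → j ≤ m'+1 → 0 < s.esymm j := by
    intro j h1 h2
    rw [← hesym]
    exact hΓ j h1 h2
  have hmem : κ i0 ∈ s := by
    rw [hs]
    exact Multiset.mem_map_of_mem κ hmemval
  have hmax : ∀ b ∈ s, b ≤ κ i0 := by
    intro b hb
    rw [hs] at hb
    obtain ⟨i, _, rfl⟩ := Multiset.mem_map.mp hb
    exact hsort i0 i (by simp [hi0, Fin.le_def])
  have hml := StmtAux.main_ms s m' (κ i0) (by omega) hG hmem hmax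
  rw [hcards] at hml
  rw [show m' + 1 - 1 = m' by omega, hesym, hrem]
  have hnpos : (0:ℝ) < (n:ℝ) := by exact_mod_cast hn
  rw [div_mul_eq_mul_div, div_le_iff₀ hnpos]
  push_cast at hml ⊢
  nlinarith [hml]
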